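/- arXiv:2403.07900 — 3 statements merged into one kernel-verified Lean document; each statement's English description precedes it below -/
import Mathlib

section
/- For any convex body C in the hyperbolic space H^d and any supporting hyperplane H of C, there exists at least one hyperplane ultraparallel to H that supports C and is at maximal distance from H among all such hyperplanes; hence width_H(C) is well defined. -/
/- We formalize hyperbolic space `H^d` via the Beltrami–Klein model: the open
unit ball of `ℝ^d`, where hyperbolic geodesic segments are exactly Euclidean
segments (so hyperbolic convexity = Euclidean convexity), hyperplanes are
chords of affine hyperplanes, and the hyperbolic distance is given by the
Cayley–Klein formula `cosh d(x,y) = (1 - ⟪x,y⟫)/√((1-‖x‖²)(1-‖y‖²))`. -/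

noncomputable section
open Metric Set RealInnerProductSpace

namespace Hyp

abbrev E (d : ℕ) := EuclideanSpace ℝ (Fin d)

/-- The Klein model of `H^d`: the open unit ball. -/
def ball01 (d : ℕ) : Set (E d) := Metric.ball 0 1

/-- Inverse hyperbolic cosine. -/
def acosh (z : ℝ) : ℝ := Real.log (z + Real.sqrt (z ^ 2 - 1))

/-- Hyperbolic distance in the Beltrami–Klein model. -/
def hDist {d : ℕ} (x y : E d) : ℝ :=
  acosh ((1 - (inner ℝ x y : ℝ)) / (Real.sqrt (1 - ‖x‖ ^ 2) * Real.sqrt (1 - ‖y‖ ^ 2)))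

/-- Hyperbolic diameter of a set. -/
def hDiam {d : ℕ} (C : Set (E d)) : ℝ :=
  sSup {r | ∃ a ∈ C, ∃ b ∈ C, hDist a b = r}

/-- Hyperbolic (infimal) distance between two sets. -/
def hSetDist {d : ℕ} (A B : Set (E d)) : ℝ :=
  sInf {r | ∃ a ∈ A, ∃ b ∈ B, hDist a b = r}

/-- Hyperbolic distance from a point to a set. -/
def hPointDist {d : ℕ} (x : E d) (A : Set (E d)) : ℝ :=
  sInf {r | ∃ a ∈ A, hDist x a = r}

/-- Closed hyperbolic ball of radius `r` about `x`. -/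
def hBall {d : ℕ} (x : E d) (r : ℝ) : Set (E d) :=
  {y ∈ ball01 d | hDist x y ≤ r}

/-- A convex body in `H^d`: compact, convex (hyperbolically, i.e. in the Klein
model also Euclidean-convex), with nonempty interior, inside the model. -/
def IsBody {d : ℕ} (C : Set (E d)) : Prop :=
  IsCompact C ∧ Convex ℝ C ∧ (interior C).Nonempty ∧ C ⊆ ball01 d

/-- A hyperplane of `H^d` in the Klein model: a chord `{x ∈ B | ⟪u,x⟫ = c}` of
the unit ball, with `‖u‖ = 1` and `|c| < 1` (so the chord is nonempty). -/
structure HPlane (d : ℕ) where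
  u : E d
  c : ℝ
  norm_u : ‖u‖ = 1
  abs_c : |c| < 1

/-- The underlying set of points of a hyperplane. -/
def HPlane.carrier {d : ℕ} (H : HPlane d) : Set (E d) :=
  {x ∈ ball01 d | (inner ℝ H.u x : ℝ) = H.c}

/-- `H` supports `C`: they meet and `C` lies in the closed half-space
`⟪u,·⟫ ≤ c` (an orientation of the normal is chosen accordingly). -/
def Supports {d : ℕ} (H : HPlane d) (C : Set (E d)) : Prop :=
  (H.carrier ∩ C).Nonempty ∧ ∀ x ∈ C, (inner ℝ H.u x : ℝ) ≤ H.c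

/-- Two hyperplanes are ultraparallel iff their closures (in `ℝ^d`, hence
including ideal boundary points) are disjoint. -/
def Ultraparallel {d : ℕ} (H K : HPlane d) : Prop :=
  closure H.carrier ∩ closure K.carrier = ∅

/-- The width of `C` determined by a supporting hyperplane `H`: the distance
from `H` to a farthest ultraparallel supporting hyperplane of `C`. -/
def hwidth {d : ℕ} (C : Set (E d)) (H : HPlane d) : ℝ :=
  sSup {r | ∃ K : HPlane d, Ultraparallel H K ∧ Supports K C ∧
    r = hSetDist H.carrier K.carrier}

/-- Thickness: the minimum width over all supporting hyperplanes. -/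
def thickness {d : ℕ} (C : Set (E d)) : ℝ :=
  sInf {r | ∃ H : HPlane d, Supports H C ∧ r = hwidth C H}

/-- A reduced body. -/
def IsReduced {d : ℕ} (R : Set (E d)) : Prop :=
  IsBody R ∧ ∀ Z : Set (E d), IsBody Z → Z ⊆ R → Z ≠ R → thickness Z < thickness R

/-- The equidistant hypersurface to `H` at distance `t`, on the side
`⟪u,·⟫ < c` (the side on which supported bodies lie). -/
def equiSurf {d : ℕ} (H : HPlane d) (t : ℝ) : Set (E d) :=
  {x ∈ ball01 d | (inner ℝ H.u x : ℝ) < H.c ∧ hPointDist x H.carrier = t}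

/-- The distance from `H` to the nearest equidistant hypersurface `E` to `H`
with `C ⊆ conv(H ∪ E)` (the thickness of the equidistant strip `conv(H ∪ E)`). -/
def equiLevel {d : ℕ} (C : Set (E d)) (H : HPlane d) : ℝ :=
  sInf {t | 0 < t ∧ C ⊆ convexHull ℝ (H.carrier ∪ equiSurf H t)}

/-- `E_H(C)`: the nearest equidistant hypersurface to `H` such that `C` is
contained in the equidistant strip `conv(H ∪ E_H(C))`. -/
def EH {d : ℕ} (C : Set (E d)) (H : HPlane d) : Set (E d) :=
  equiSurf H (equiLevel C H)

/-- A body of constant width `δ`. -/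
def ConstWidth {d : ℕ} (C : Set (E d)) (δ : ℝ) : Prop :=
  ∀ H : HPlane d, Supports H C → hwidth C H = δ

/-- A complete set of diameter `δ`: adding any point of `H^d` outside `C`
strictly increases the diameter. -/
def IsComplete {d : ℕ} (C : Set (E d)) (δ : ℝ) : Prop :=
  hDiam C = δ ∧ ∀ x ∈ ball01 d, x ∉ C → hDiam (insert x C) > δ

/-- The circular arc `P_c(a,b)`: points `g` at hyperbolic distance `δ` from `c`
whose (hyperbolic = Euclidean, in the Klein model) segment to `c` meets the
segment `ab`. -/
def arcP {d : ℕ} (c a b : E d) (δ : ℝ) : Set (E d) :=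
  {g ∈ ball01 d | hDist c g = δ ∧ (segment ℝ c g ∩ segment ℝ a b).Nonempty}


open Filter Topology

variable {d : ℕ}

lemma mem_ball01 {x : E d} : x ∈ ball01 d ↔ ‖x‖ < 1 := mem_ball_zero_iff

lemma one_le_ratio {a b : E d} (ha : ‖a‖ < 1) (hb : ‖b‖ < 1) :
    1 ≤ (1 - (inner ℝ a b : ℝ)) / (Real.sqrt (1 - ‖a‖ ^ 2) * Real.sqrt (1 - ‖b‖ ^ 2)) := by
  have hp : (0:ℝ) < 1 - ‖a‖ ^ 2 := by nlinarith [norm_nonneg a]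
  have hq : (0:ℝ) < 1 - ‖b‖ ^ 2 := by nlinarith [norm_nonneg b]
  have hD : 0 < Real.sqrt (1 - ‖a‖ ^ 2) * Real.sqrt (1 - ‖b‖ ^ 2) :=
    mul_pos (Real.sqrt_pos.mpr hp) (Real.sqrt_pos.mpr hq)
  rw [one_le_div hD]
  have h1 : (inner ℝ a b : ℝ) ≤ ‖a‖ * ‖b‖ := real_inner_le_norm a b
  have h2 : Real.sqrt (1 - ‖a‖ ^ 2) * Real.sqrt (1 - ‖b‖ ^ 2) ≤ ((1 - ‖a‖^2) + (1 - ‖b‖^2))/2 := by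
    nlinarith [sq_nonneg (Real.sqrt (1 - ‖a‖ ^ 2) - Real.sqrt (1 - ‖b‖ ^ 2)),
      Real.sq_sqrt hp.le, Real.sq_sqrt hq.le]
  nlinarith [sq_nonneg (‖a‖ - ‖b‖)]

lemma acosh_nonneg {z : ℝ} (hz : 1 ≤ z) : 0 ≤ acosh z :=
  Real.log_nonneg (by nlinarith [Real.sqrt_nonneg (z^2 - 1)])

lemma hDist_nonneg {a b : E d} (ha : ‖a‖ < 1) (hb : ‖b‖ < 1) : 0 ≤ hDist a b :=
  acosh_nonneg (one_le_ratio ha hb)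

lemma acosh_le_log {z : ℝ} (hz : 1 ≤ z) : acosh z ≤ Real.log (2 * z) := by
  apply Real.log_le_log (by nlinarith [Real.sqrt_nonneg (z^2-1)])
  have h3 : Real.sqrt (z^2 - 1) ≤ z := by
    have := Real.sqrt_le_sqrt (show z^2 - 1 ≤ z^2 by linarith)
    rwa [Real.sqrt_sq (by linarith : 0 ≤ z)] at this
  linarith

lemma continuousAt_acosh {z : ℝ} (hz : 1 ≤ z) : ContinuousAt acosh z := by
  have h1 : Continuous fun w : ℝ => w + Real.sqrt (w ^ 2 - 1) := by continuity
  have h2 : z + Real.sqrt (z ^ 2 - 1) ≠ 0 := by nlinarith [Real.sqrt_nonneg (z^2-1)]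
  exact ContinuousAt.comp (g := Real.log) (f := fun w : ℝ => w + Real.sqrt (w ^ 2 - 1))
    (Real.continuousAt_log h2) h1.continuousAt

lemma acosh_one : acosh 1 = 0 := by
  simp [acosh]

lemma continuousAt_hDist (a : E d) {b : E d} (ha : ‖a‖ < 1) (hb : ‖b‖ < 1) :
    ContinuousAt (fun y => hDist a y) b := by
  have hq : (0:ℝ) < 1 - ‖b‖ ^ 2 := by nlinarith [norm_nonneg b]
  have hp : (0:ℝ) < 1 - ‖a‖ ^ 2 := by nlinarith [norm_nonneg a]
  have hD : Real.sqrt (1 - ‖a‖ ^ 2) * Real.sqrt (1 - ‖b‖ ^ 2) ≠ 0 :=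
    (mul_pos (Real.sqrt_pos.mpr hp) (Real.sqrt_pos.mpr hq)).ne'
  have hratio : ContinuousAt
      (fun y : E d => (1 - (inner ℝ a y : ℝ)) / (Real.sqrt (1 - ‖a‖ ^ 2) * Real.sqrt (1 - ‖y‖ ^ 2))) b := by
    apply ContinuousAt.div
    · exact (continuous_const.sub (continuous_const.inner continuous_id)).continuousAt
    · exact (continuous_const.mul ((Real.continuous_sqrt).comp
        (continuous_const.sub (continuous_norm.pow 2)))).continuousAt
    · exact hD
  exact ContinuousAt.comp (g := acosh)
    (f := fun y : E d => (1 - (inner ℝ a y : ℝ)) / (Real.sqrt (1 - ‖a‖ ^ 2) * Real.sqrt (1 - ‖y‖ ^ 2)))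
    (continuousAt_acosh (one_le_ratio ha hb)) hratio


lemma mem_carrier {H : HPlane d} {x : E d} :
    x ∈ H.carrier ↔ ‖x‖ < 1 ∧ (inner ℝ H.u x : ℝ) = H.c := by
  unfold HPlane.carrier; rw [Set.mem_sep_iff, mem_ball01]

/-- generic segment-toward-center membership -/
lemma seg_mem {u x : E d} {c s : ℝ} (hu : ‖u‖ = 1) (hc : |c| < 1)
    (hx : ‖x‖ ≤ 1) (hux : (inner ℝ u x : ℝ) = c) (hs0 : 0 < s) (hs1 : s ≤ 1) :
    ‖x + s • (c • u - x)‖ < 1 ∧ (inner ℝ u (x + s • (c • u - x)) : ℝ) = c := by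
  constructor
  · have he : x + s • (c • u - x) = (1 - s) • x + s • (c • u) := by
      rw [smul_sub, sub_smul, one_smul]; abel
    rw [he]
    calc ‖(1 - s) • x + s • (c • u)‖ ≤ ‖(1 - s) • x‖ + ‖s • (c • u)‖ := norm_add_le _ _
      _ = (1 - s) * ‖x‖ + s * (|c| * ‖u‖) := by
          rw [norm_smul, norm_smul, norm_smul, Real.norm_eq_abs, Real.norm_eq_abs,
            Real.norm_eq_abs, abs_of_nonneg (by linarith : (0:ℝ) ≤ 1 - s), abs_of_pos hs0]
      _ < 1 := by rw [hu]; nlinarith [abs_nonneg c]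
  · have huu : (inner ℝ u u : ℝ) = 1 := by
      rw [real_inner_self_eq_norm_sq, hu]; norm_num
    rw [inner_add_right, inner_smul_right, inner_sub_right, inner_smul_right, huu, hux]
    ring

lemma center_mem_carrier (H : HPlane d) : H.c • H.u ∈ H.carrier := by
  rw [mem_carrier]
  constructor
  · rw [norm_smul, Real.norm_eq_abs, H.norm_u, mul_one]; exact H.abs_c
  · rw [real_inner_smul_right, real_inner_self_eq_norm_sq, H.norm_u]; norm_num

lemma closure_carrier (H : HPlane d) :
    closure H.carrier = {x | ‖x‖ ≤ 1 ∧ (inner ℝ H.u x : ℝ) = H.c} := by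
  apply Subset.antisymm
  · apply closure_minimal
    · rintro x hx
      rw [mem_carrier] at hx
      exact ⟨hx.1.le, hx.2⟩
    · rw [show {x : E d | ‖x‖ ≤ 1 ∧ (inner ℝ H.u x : ℝ) = H.c}
          = {x : E d | ‖x‖ ≤ 1} ∩ {x : E d | (inner ℝ H.u x : ℝ) = H.c} from rfl]
      exact (isClosed_le continuous_norm continuous_const).inter
        (isClosed_eq (continuous_const.inner continuous_id) continuous_const)
  · rintro x ⟨hx1, hx2⟩
    have key : Tendsto (fun n : ℕ => x + ((1:ℝ)/(n+1)) • (H.c • H.u - x)) atTop (𝓝 x) := by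
      have h0 : Tendsto (fun n : ℕ => (1:ℝ)/(n+1)) atTop (𝓝 0) :=
        tendsto_one_div_add_atTop_nhds_zero_nat
      have := (h0.smul_const (H.c • H.u - x)).const_add x
      simpa using this
    apply mem_closure_of_tendsto key
    filter_upwards with n
    have hs0 : (0:ℝ) < 1/(n+1) := by positivity
    have hs1 : (1:ℝ)/(n+1) ≤ 1 := by
      rw [div_le_one (by positivity)]; simp
    have := seg_mem H.norm_u H.abs_c hx1 hx2 hs0 hs1
    exact mem_carrier.mpr this

lemma distSet_nonneg (H K : HPlane d) :
    ∀ r ∈ {r | ∃ a ∈ H.carrier, ∃ b ∈ K.carrier, hDist a b = r}, 0 ≤ r := by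
  rintro r ⟨a, ha, b, hb, rfl⟩
  exact hDist_nonneg (mem_carrier.mp ha).1 (mem_carrier.mp hb).1

lemma hSetDist_nonneg (H K : HPlane d) : 0 ≤ hSetDist H.carrier K.carrier :=
  Real.sInf_nonneg (distSet_nonneg H K)

lemma hSetDist_le_hDist {H K : HPlane d} {a b : E d}
    (ha : a ∈ H.carrier) (hb : b ∈ K.carrier) :
    hSetDist H.carrier K.carrier ≤ hDist a b :=
  csInf_le ⟨0, distSet_nonneg H K⟩ ⟨a, ha, b, hb, rfl⟩

lemma distSet_nonempty (H K : HPlane d) :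
    {r | ∃ a ∈ H.carrier, ∃ b ∈ K.carrier, hDist a b = r}.Nonempty :=
  ⟨_, H.c • H.u, center_mem_carrier H, K.c • K.u, center_mem_carrier K, rfl⟩

def supC (C : Set (E d)) (v : E d) : ℝ := sSup ((fun x => (inner ℝ v x : ℝ)) '' C)

lemma bddAbove_img (C : Set (E d)) (hc : IsCompact C) (v : E d) :
    BddAbove ((fun x => (inner ℝ v x : ℝ)) '' C) :=
  hc.bddAbove_image ((continuous_const.inner continuous_id).continuousOn)

lemma le_supC {C : Set (E d)} (hc : IsCompact C) {v x : E d} (hx : x ∈ C) :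
    (inner ℝ v x : ℝ) ≤ supC C v :=
  le_csSup (bddAbove_img C hc v) (Set.mem_image_of_mem _ hx)

lemma supC_le {C : Set (E d)} (hne : C.Nonempty) {v : E d} {y : ℝ}
    (h : ∀ x ∈ C, (inner ℝ v x : ℝ) ≤ y) : supC C v ≤ y := by
  apply csSup_le (hne.image _)
  rintro r ⟨x, hx, rfl⟩; exact h x hx

lemma exists_max (C : Set (E d)) (hc : IsCompact C) (hne : C.Nonempty) (v : E d) :
    ∃ x ∈ C, (inner ℝ v x : ℝ) = supC C v := by
  obtain ⟨x, hx, hmax⟩ := hc.exists_isMaxOn hne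
    ((continuous_const.inner continuous_id).continuousOn (f := fun x => (inner ℝ v x : ℝ)))
  refine ⟨x, hx, le_antisymm (le_supC hc hx) (supC_le hne fun y hy => hmax hy)⟩

lemma supC_sub_le {C : Set (E d)} (hc : IsCompact C) (hne : C.Nonempty)
    (hsub : C ⊆ ball01 d) (v w : E d) : supC C v - supC C w ≤ ‖v - w‖ := by
  rw [sub_le_iff_le_add]
  apply supC_le hne
  intro x hx
  have h1 : (inner ℝ v x : ℝ) = (inner ℝ w x : ℝ) + (inner ℝ (v - w) x : ℝ) := by
    rw [inner_sub_left]; ring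
  have h2 : (inner ℝ (v - w) x : ℝ) ≤ ‖v - w‖ * ‖x‖ := real_inner_le_norm _ _
  have h3 : ‖x‖ ≤ 1 := (mem_ball01.mp (hsub hx)).le
  have h4 : (inner ℝ (v-w) x : ℝ) ≤ ‖v - w‖ := by
    calc (inner ℝ (v-w) x : ℝ) ≤ ‖v - w‖ * ‖x‖ := h2
    _ ≤ ‖v - w‖ * 1 := by nlinarith [norm_nonneg (v - w)]
    _ = ‖v - w‖ := mul_one _
  linarith [le_supC hc hx (v := w)]

/-- The Cayley–Klein ratio along segments from a common ideal point `x`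
towards the centers of two chords, with matched speed ratio `σ = A/Bq`. -/
lemma hDist_seg (H : HPlane d) {x v : E d} {β t A Bq σ : ℝ}
    (hA : A = 1 - H.c^2) (hB : Bq = 1 - β^2) (hσ : σ = A/Bq)
    (hx1 : ‖x‖ = 1) (hux : (inner ℝ H.u x : ℝ) = H.c)
    (hv : ‖v‖ = 1) (hvx : (inner ℝ v x : ℝ) = β) (hβ : |β| < 1) (ht : 0 < t) :
    hDist (x + t • (H.c • H.u - x)) (x + (σ*t) • (β • v - x))
      = acosh ((2*A - σ*t*(inner ℝ (H.c • H.u - x) (β • v - x) : ℝ)) /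
          (Real.sqrt (2*A - t*‖H.c • H.u - x‖^2) *
           Real.sqrt (2*A - σ^2*t*‖β • v - x‖^2))) := by
  have hBq : (0:ℝ) < Bq := by rw [hB]; nlinarith [abs_nonneg β, sq_abs β, abs_lt.mp hβ]
  have hA0 : (0:ℝ) < A := by
    rw [hA]; nlinarith [abs_nonneg H.c, sq_abs H.c, abs_lt.mp H.abs_c]
  have hσB : σ * Bq = A := by rw [hσ]; field_simp
  set m1 := H.c • H.u - x with hm1
  set m2 := β • v - x with hm2
  have hcx : (inner ℝ x H.u : ℝ) = H.c := by rw [real_inner_comm]; exact hux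
  have hvx' : (inner ℝ x v : ℝ) = β := by rw [real_inner_comm]; exact hvx
  have hxm1 : (inner ℝ x m1 : ℝ) = H.c^2 - 1 := by
    rw [hm1, inner_sub_right, real_inner_smul_right, hcx, real_inner_self_eq_norm_sq, hx1]
    ring
  have hxm2 : (inner ℝ x m2 : ℝ) = β^2 - 1 := by
    rw [hm2, inner_sub_right, real_inner_smul_right, hvx', real_inner_self_eq_norm_sq, hx1]
    ring
  set q := ‖m1‖^2
  set r := ‖m2‖^2
  set w := (inner ℝ m1 m2 : ℝ) with hw
  have h1 : 1 - ‖x + t • m1‖^2 = t * (2*A - t*q) := by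
    rw [norm_add_sq_real, real_inner_smul_right, hxm1, norm_smul, Real.norm_eq_abs,
      mul_pow, sq_abs, hx1, hA]
    ring
  have h2 : 1 - ‖x + (σ*t) • m2‖^2 = t * (2*A - σ^2*t*r) := by
    rw [norm_add_sq_real, real_inner_smul_right, hxm2, norm_smul, Real.norm_eq_abs,
      mul_pow, sq_abs, hx1]
    linear_combination 2*t*hσB - 2*σ*t*hB
  have h3 : 1 - (inner ℝ (x + t • m1) (x + (σ*t) • m2) : ℝ) = t * (2*A - σ*t*w) := by
    have hm1x : (inner ℝ m1 x : ℝ) = H.c^2 - 1 := by rw [real_inner_comm]; exact hxm1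
    rw [inner_add_left, inner_add_right, inner_add_right, real_inner_smul_left,
      real_inner_smul_left, real_inner_smul_right, real_inner_smul_right,
      real_inner_self_eq_norm_sq, hx1, hm1x, hxm2, ← hw]
    linear_combination t * hσB - σ*t*hB - t*hA
  show acosh _ = acosh _
  congr 1
  rw [h3, h1, h2, Real.sqrt_mul ht.le, Real.sqrt_mul ht.le,
    show Real.sqrt t * Real.sqrt (2*A - t*q) * (Real.sqrt t * Real.sqrt (2*A - σ^2*t*r))
      = (Real.sqrt t * Real.sqrt t) * (Real.sqrt (2*A - t*q) * Real.sqrt (2*A - σ^2*t*r)) by ring,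
    Real.mul_self_sqrt ht.le]
  exact mul_div_mul_left _ _ (ne_of_gt ht)

lemma exists_close_pair (H : HPlane d) {x v : E d} {β : ℝ}
    (hx1 : ‖x‖ = 1) (hux : (inner ℝ H.u x : ℝ) = H.c)
    (hv : ‖v‖ = 1) (hvx : (inner ℝ v x : ℝ) = β) (hβ : |β| < 1)
    {ε : ℝ} (hε : 0 < ε) :
    ∃ a b : E d, (‖a‖ < 1 ∧ (inner ℝ H.u a : ℝ) = H.c) ∧
      (‖b‖ < 1 ∧ (inner ℝ v b : ℝ) = β) ∧ hDist a b < ε := by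
  set A := 1 - H.c^2 with hA
  set Bq := 1 - β^2 with hB
  set σ := A/Bq with hσ
  have hBq : (0:ℝ) < Bq := by rw [hB]; nlinarith [abs_nonneg β, sq_abs β, abs_lt.mp hβ]
  have hA0 : (0:ℝ) < A := by
    rw [hA]; nlinarith [abs_nonneg H.c, sq_abs H.c, abs_lt.mp H.abs_c]
  have hσ0 : (0:ℝ) < σ := div_pos hA0 hBq
  set W := (inner ℝ (H.c • H.u - x) (β • v - x) : ℝ) with hW
  set Q := ‖H.c • H.u - x‖^2 with hQ
  set R := ‖β • v - x‖^2 with hR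
  set g : ℝ → ℝ := fun t => (2*A - σ*t*W) /
      (Real.sqrt (2*A - t*Q) * Real.sqrt (2*A - σ^2*t*R)) with hg
  have hg0 : g 0 = 1 := by
    simp only [hg, mul_zero, zero_mul, sub_zero]
    rw [Real.mul_self_sqrt (by linarith), div_self (by linarith)]
  have hcont : ContinuousAt g 0 := by
    apply ContinuousAt.div
    · exact (continuous_const.sub ((continuous_const.mul continuous_id).mul continuous_const)).continuousAt
    · apply ContinuousAt.mul
      · exact (Real.continuous_sqrt.comp
          (continuous_const.sub (continuous_id.mul continuous_const))).continuousAt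
      · exact (Real.continuous_sqrt.comp
          (continuous_const.sub ((continuous_const.mul continuous_id).mul continuous_const))).continuousAt
    · rw [show (0:ℝ)*Q = 0 by ring, show σ^2*0*R = 0 by ring, sub_zero,
        Real.mul_self_sqrt (by linarith)]
      linarith
  have htend : Tendsto (fun t => acosh (g t)) (𝓝 0) (𝓝 0) := by
    have h1 : ContinuousAt acosh (g 0) := by rw [hg0]; exact continuousAt_acosh le_rfl
    have h2 : acosh (g 0) = 0 := by rw [hg0, acosh_one]
    simpa [Function.comp_def, h2] using (h1.comp hcont).tendsto
  have hev : ∀ᶠ t in 𝓝 (0:ℝ), acosh (g t) < ε := htend.eventually_lt_const hε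
  obtain ⟨δ, hδ0, hδ⟩ := Metric.eventually_nhds_iff.mp hev
  set t := min (δ/2) (min 1 (Bq/A)) with htdef
  have ht0 : 0 < t := by
    apply lt_min (by linarith)
    exact lt_min one_pos (div_pos hBq hA0)
  have ht1 : t ≤ 1 := le_trans (min_le_right _ _) (min_le_left _ _)
  have htBA : t ≤ Bq/A := le_trans (min_le_right _ _) (min_le_right _ _)
  have hσt1 : σ * t ≤ 1 := by
    have : σ * t ≤ σ * (Bq/A) := by nlinarith
    calc σ * t ≤ σ * (Bq/A) := this
      _ = 1 := by rw [hσ]; field_simp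
  have hσt0 : 0 < σ * t := mul_pos hσ0 ht0
  have hmem1 := seg_mem H.norm_u H.abs_c hx1.le hux ht0 ht1
  have hmem2 := seg_mem hv hβ hx1.le hvx hσt0 hσt1
  refine ⟨x + t • (H.c • H.u - x), x + (σ*t) • (β • v - x), hmem1, hmem2, ?_⟩
  have heq := hDist_seg H hA hB hσ hx1 hux hv hvx hβ ht0
  rw [heq]
  apply hδ
  rw [Real.dist_eq, sub_zero, abs_of_pos ht0]
  calc t ≤ δ/2 := min_le_left _ _
    _ < δ := by linarith
lemma hDist_le_bound {a b : E d} {R' : ℝ} (hR'0 : 0 ≤ R') (hR'1 : R' < 1)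
    (ha : ‖a‖ ≤ R') (hb : ‖b‖ ≤ R') : hDist a b ≤ Real.log (2 * (2/(1-R'^2))) := by
  have ha1 : ‖a‖ < 1 := lt_of_le_of_lt ha hR'1
  have hb1 : ‖b‖ < 1 := lt_of_le_of_lt hb hR'1
  have hz := one_le_ratio ha1 hb1
  have hRp : (0:ℝ) < 1 - R'^2 := by nlinarith
  have hN : 1 - (inner ℝ a b : ℝ) ≤ 2 := by
    have := abs_real_inner_le_norm a b
    have h2 : |(inner ℝ a b : ℝ)| ≤ 1 := le_trans this (by nlinarith [norm_nonneg a, norm_nonneg b])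
    linarith [abs_le.mp h2]
  have hD : 1 - R'^2 ≤ Real.sqrt (1 - ‖a‖^2) * Real.sqrt (1 - ‖b‖^2) := by
    have h1 : Real.sqrt (1 - R'^2) ≤ Real.sqrt (1 - ‖a‖^2) := Real.sqrt_le_sqrt (by nlinarith [norm_nonneg a])
    have h2 : Real.sqrt (1 - R'^2) ≤ Real.sqrt (1 - ‖b‖^2) := Real.sqrt_le_sqrt (by nlinarith [norm_nonneg b])
    calc 1 - R'^2 = Real.sqrt (1 - R'^2) * Real.sqrt (1 - R'^2) := (Real.mul_self_sqrt hRp.le).symm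
      _ ≤ Real.sqrt (1 - ‖a‖^2) * Real.sqrt (1 - ‖b‖^2) :=
          mul_le_mul h1 h2 (Real.sqrt_nonneg _) (Real.sqrt_nonneg _)
  have hzle : (1 - (inner ℝ a b : ℝ)) / (Real.sqrt (1 - ‖a‖^2) * Real.sqrt (1 - ‖b‖^2)) ≤ 2/(1-R'^2) :=
    div_le_div₀ (by norm_num) hN hRp hD
  calc hDist a b ≤ Real.log (2 * ((1 - (inner ℝ a b : ℝ)) /
        (Real.sqrt (1 - ‖a‖^2) * Real.sqrt (1 - ‖b‖^2)))) := acosh_le_log hz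
    _ ≤ Real.log (2 * (2/(1-R'^2))) := Real.log_le_log (by linarith) (by linarith)

/-- For any convex body `C` and supporting hyperplane `H` there is a
farthest ultraparallel supporting hyperplane of `C`; hence `width_H(C)` is
well defined. -/
theorem exists_farthest_ultraparallel_supporting {d : ℕ} (C : Set (E d))
    (hC : IsBody C) (H : HPlane d) (hH : Supports H C) :
    ∃ K : HPlane d, Ultraparallel H K ∧ Supports K C ∧
      ∀ K' : HPlane d, Ultraparallel H K' → Supports K' C →
        hSetDist H.carrier K'.carrier ≤ hSetDist H.carrier K.carrier := by
  classical
  obtain ⟨hcomp, hconvx, hint, hsub⟩ := hC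
  obtain ⟨p, hp⟩ := hint
  have hCne : C.Nonempty := ⟨p, interior_subset hp⟩
  obtain ⟨x₀, hx₀C, hx₀max⟩ := hcomp.exists_isMaxOn hCne continuous_norm.continuousOn
  set R := ‖x₀‖ with hRdef
  have hR1 : R < 1 := mem_ball01.mp (hsub hx₀C)
  have hR0 : (0:ℝ) ≤ R := norm_nonneg _
  have hnormle : ∀ x ∈ C, ‖x‖ ≤ R := fun x hx => hx₀max hx
  have habs1 : ∀ v : E d, ‖v‖ = 1 → |supC C v| < 1 := by
    intro v hv
    have hle : supC C v ≤ R := supC_le hCne (fun x hx => by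
      calc (inner ℝ v x : ℝ) ≤ ‖v‖ * ‖x‖ := real_inner_le_norm v x
        _ = ‖x‖ := by rw [hv, one_mul]
        _ ≤ R := hnormle x hx)
    have hge : -R ≤ supC C v := by
      have h1 : |(inner ℝ v x₀ : ℝ)| ≤ ‖v‖ * ‖x₀‖ := abs_real_inner_le_norm v x₀
      rw [hv, one_mul] at h1
      have := le_supC hcomp hx₀C (v := v)
      linarith [abs_le.mp h1]
    rw [abs_lt]; constructor <;> linarith
  have hSupp : ∀ (v : E d) (hv : ‖v‖ = 1), Supports ⟨v, supC C v, hv, habs1 v hv⟩ C := by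
    intro v hv
    obtain ⟨y, hyC, hy⟩ := exists_max C hcomp hCne v
    exact ⟨⟨y, mem_carrier.mpr ⟨mem_ball01.mp (hsub hyC), hy⟩, hyC⟩,
      fun x hx => le_supC hcomp hx⟩
  have hc_eq : ∀ K : HPlane d, Supports K C → K.c = supC C K.u := by
    intro K hK
    obtain ⟨y, hy⟩ := hK.1
    have h1 : (inner ℝ K.u y : ℝ) = K.c := (mem_carrier.mp hy.1).2
    refine le_antisymm ?_ (supC_le hCne hK.2)
    rw [← h1]; exact le_supC hcomp hy.2
  -- the hyperplane K₋ opposite to H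
  have hvneg : ‖-H.u‖ = 1 := by rw [norm_neg, H.norm_u]
  set Kneg : HPlane d := ⟨-H.u, supC C (-H.u), hvneg, habs1 _ hvneg⟩ with hKnegdef
  have hKnegSupp : Supports Kneg C := hSupp (-H.u) hvneg
  obtain ⟨εp, hεp, hballp⟩ := Metric.isOpen_iff.mp isOpen_interior p hp
  have hmc : -(supC C (-H.u)) < H.c := by
    have hdistp : dist (p - (εp/2) • H.u) p < εp := by
      have he : p - (εp/2) • H.u - p = -((εp/2) • H.u) := by abel
      rw [dist_eq_norm, he, norm_neg, norm_smul, Real.norm_eq_abs, H.norm_u, mul_one,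
        abs_of_pos (by positivity)]
      linarith
    have hq : p - (εp/2) • H.u ∈ C := interior_subset (hballp (mem_ball.mpr hdistp))
    have h1 : (inner ℝ (-H.u) (p - (εp/2) • H.u) : ℝ) ≤ supC C (-H.u) := le_supC hcomp hq
    have h2 : (inner ℝ H.u p : ℝ) ≤ H.c := hH.2 p (interior_subset hp)
    have h3 : (inner ℝ (-H.u) (p - (εp/2) • H.u) : ℝ) = -(inner ℝ H.u p : ℝ) + εp/2 := by
      rw [inner_neg_left, inner_sub_right, real_inner_smul_right,
        real_inner_self_eq_norm_sq, H.norm_u]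
      ring
    rw [h3] at h1
    linarith
  have hKnegUltra : Ultraparallel H Kneg := by
    rw [Ultraparallel, closure_carrier, closure_carrier, Set.eq_empty_iff_forall_notMem]
    rintro y ⟨⟨hy1, hy2⟩, ⟨hy3, hy4⟩⟩
    have hy4' : (inner ℝ (-H.u) y : ℝ) = supC C (-H.u) := hy4
    rw [inner_neg_left] at hy4'
    rw [show (inner ℝ H.u y : ℝ) = H.c from hy2] at hy4'
    linarith
  -- the set of achieved distances
  set S := {r | ∃ K : HPlane d, Ultraparallel H K ∧ Supports K C ∧
    r = hSetDist H.carrier K.carrier} with hSdef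
  have hSne : S.Nonempty := ⟨_, Kneg, hKnegUltra, hKnegSupp, rfl⟩
  set R' := max R |H.c| with hR'def
  have hR'1 : R' < 1 := max_lt hR1 H.abs_c
  have hR'0 : (0:ℝ) ≤ R' := le_trans hR0 (le_max_left _ _)
  have hbdd : BddAbove S := by
    refine ⟨Real.log (2 * (2/(1-R'^2))), ?_⟩
    rintro r ⟨K, hKu, hKs, rfl⟩
    obtain ⟨y, hy⟩ := hKs.1
    have hyR : ‖y‖ ≤ R' := le_trans (hnormle y hy.2) (le_max_left _ _)
    have ha0R : ‖H.c • H.u‖ ≤ R' := by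
      rw [norm_smul, Real.norm_eq_abs, H.norm_u, mul_one]; exact le_max_right _ _
    exact le_trans (hSetDist_le_hDist (center_mem_carrier H) hy.1)
      (hDist_le_bound hR'0 hR'1 ha0R hyR)
  set M := sSup S with hMdef
  have hMem : ∀ K' : HPlane d, Ultraparallel H K' → Supports K' C →
      hSetDist H.carrier K'.carrier ≤ M :=
    fun K' h1 h2 => le_csSup hbdd ⟨K', h1, h2, rfl⟩
  -- a maximizing sequence
  have hseq : ∀ n : ℕ, ∃ K : HPlane d, Ultraparallel H K ∧ Supports K C ∧
      M - 1/((n:ℝ)+1) < hSetDist H.carrier K.carrier := by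
    intro n
    have hlt : M - 1/((n:ℝ)+1) < M := by
      have : (0:ℝ) < 1/((n:ℝ)+1) := by positivity
      linarith
    obtain ⟨r, hrS, hr⟩ := exists_lt_of_lt_csSup hSne hlt
    obtain ⟨K, h1, h2, rfl⟩ := hrS
    exact ⟨K, h1, h2, hr⟩
  choose Ks hKs1 hKs2 hKs3 using hseq
  have humem : ∀ n, (Ks n).u ∈ sphere (0:E d) 1 :=
    fun n => mem_sphere_zero_iff_norm.mpr (Ks n).norm_u
  obtain ⟨vs, hvsmem, φ, hφ, hconv0⟩ := (isCompact_sphere (0:E d) 1).tendsto_subseq humem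
  have hvs1 : ‖vs‖ = 1 := mem_sphere_zero_iff_norm.mp hvsmem
  have hconv : Tendsto (fun n => (Ks (φ n)).u) atTop (𝓝 vs) := hconv0
  set β := supC C vs with hβdef
  set Kstar : HPlane d := ⟨vs, β, hvs1, habs1 vs hvs1⟩ with hKstardef
  have hKstarSupp : Supports Kstar C := hSupp vs hvs1
  set fstar := hSetDist H.carrier Kstar.carrier with hfstardef
  have hcconv : Tendsto (fun n => (Ks (φ n)).c) atTop (𝓝 β) := by
    have h2 : ∀ n, |(Ks (φ n)).c - β| ≤ ‖(Ks (φ n)).u - vs‖ := by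
      intro n
      rw [hc_eq _ (hKs2 (φ n))]
      rw [abs_sub_le_iff]
      constructor
      · exact supC_sub_le hcomp hCne hsub _ _
      · rw [← norm_neg, show -((Ks (φ n)).u - vs) = vs - (Ks (φ n)).u by abel]
        exact supC_sub_le hcomp hCne hsub _ _
    have h3 : Tendsto (fun n => ‖(Ks (φ n)).u - vs‖) atTop (𝓝 0) :=
      tendsto_iff_norm_sub_tendsto_zero.mp hconv
    have h4 : Tendsto (fun n => (Ks (φ n)).c - β) atTop (𝓝 0) :=
      squeeze_zero_norm h2 h3
    have := h4.add_const β
    simpa using this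
  -- main estimate : M ≤ fstar
  have hMle : M ≤ fstar := by
    apply le_of_forall_pos_le_add
    intro ε hε
    obtain ⟨r0, hr0S, hr0⟩ := exists_lt_of_csInf_lt (distSet_nonempty H Kstar)
      (show fstar < fstar + ε/2 by linarith)
    obtain ⟨a, haH, b, hbK, rfl⟩ := hr0S
    have haH' := mem_carrier.mp haH
    have hbK' := mem_carrier.mp hbK
    have hvsb : (inner ℝ vs b : ℝ) = β := hbK'.2
    set bn : ℕ → E d :=
      fun n => b + ((Ks (φ n)).c - (inner ℝ (Ks (φ n)).u b : ℝ)) • (Ks (φ n)).u with hbndef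
    have hcoef : Tendsto (fun n => (Ks (φ n)).c - (inner ℝ (Ks (φ n)).u b : ℝ)) atTop (𝓝 0) := by
      have hctsin : Continuous fun w : E d => (inner ℝ w b : ℝ) :=
        continuous_id.inner continuous_const
      have h5 : Tendsto (fun n => (inner ℝ (Ks (φ n)).u b : ℝ)) atTop (𝓝 (inner ℝ vs b : ℝ)) :=
        (hctsin.continuousAt.tendsto).comp hconv
      have := hcconv.sub h5
      rw [hvsb] at this
      simpa using this
    have hbtend : Tendsto bn atTop (𝓝 b) := by
      have h6 : Tendsto (fun n => ((Ks (φ n)).c - (inner ℝ (Ks (φ n)).u b : ℝ)) • (Ks (φ n)).u)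
          atTop (𝓝 0) := by
        simpa using hcoef.smul hconv
      simpa using (tendsto_const_nhds (x := b) (f := atTop)).add h6
    have hnorm : ∀ᶠ n in atTop, ‖bn n‖ < 1 :=
      (hbtend.norm).eventually_lt_const hbK'.1
    have hdist : ∀ᶠ n in atTop, hDist a (bn n) < fstar + ε := by
      have hcb : ContinuousAt (fun y => hDist a y) b := continuousAt_hDist a haH'.1 hbK'.1
      have h7 : Tendsto (fun n => hDist a (bn n)) atTop (𝓝 (hDist a b)) :=
        (hcb.tendsto).comp hbtend
      exact h7.eventually_lt_const (by linarith)
    have hbig : ∀ᶠ n in atTop, hSetDist H.carrier (Ks (φ n)).carrier < fstar + ε := by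
      filter_upwards [hnorm, hdist] with n h1 h2
      have hmemb : bn n ∈ (Ks (φ n)).carrier := by
        rw [mem_carrier]
        refine ⟨h1, ?_⟩
        rw [hbndef]
        simp only
        rw [inner_add_right, real_inner_smul_right, real_inner_self_eq_norm_sq,
          (Ks (φ n)).norm_u]
        ring
      exact lt_of_le_of_lt (hSetDist_le_hDist haH hmemb) h2
    obtain ⟨N, hN⟩ := eventually_atTop.mp hbig
    by_contra hcon
    push_neg at hcon
    obtain ⟨n0, hn0⟩ := exists_nat_one_div_lt (show (0:ℝ) < M - (fstar + ε) by linarith)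
    set n := max N n0 with hndef
    have hAn := hN n (le_max_left _ _)
    have hBn := hKs3 (φ n)
    have hφn : ((n:ℝ)) + 1 ≤ ((φ n : ℕ):ℝ) + 1 := by
      have := hφ.le_apply (x := n)
      have : (n:ℝ) ≤ ((φ n : ℕ):ℝ) := by exact_mod_cast this
      linarith
    have h8 : 1/(((φ n : ℕ):ℝ)+1) ≤ 1/((n:ℝ)+1) :=
      one_div_le_one_div_of_le (by positivity) hφn
    have h9 : 1/((n:ℝ)+1) ≤ 1/((n0:ℝ)+1) := by
      apply one_div_le_one_div_of_le (by positivity)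
      have : (n0:ℝ) ≤ (n:ℝ) := by exact_mod_cast le_max_right N n0
      linarith
    linarith
  by_cases hcase : Ultraparallel H Kstar
  · exact ⟨Kstar, hcase, hKstarSupp,
      fun K' h1 h2 => le_trans (hMem K' h1 h2) hMle⟩
  · have hfne : (closure H.carrier ∩ closure Kstar.carrier).Nonempty := by
      rw [Ultraparallel] at hcase
      exact Set.nonempty_iff_ne_empty.mpr hcase
    obtain ⟨x, hxH, hxK⟩ := hfne
    rw [closure_carrier] at hxH hxK
    have hxK2 : (inner ℝ vs x : ℝ) = β := hxK.2
    have hfstar0 : fstar ≤ 0 := by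
      rcases lt_or_eq_of_le hxH.1 with hlt | heq1
      · have hxHc : x ∈ H.carrier := mem_carrier.mpr ⟨hlt, hxH.2⟩
        have hxKc : x ∈ Kstar.carrier := mem_carrier.mpr ⟨hlt, hxK.2⟩
        have hdxx : hDist x x = 0 := by
          have hx2 : (0:ℝ) < 1 - ‖x‖^2 := by nlinarith [norm_nonneg x]
          rw [hDist, real_inner_self_eq_norm_sq, Real.mul_self_sqrt hx2.le,
            div_self hx2.ne', acosh_one]
        calc fstar ≤ hDist x x := hSetDist_le_hDist hxHc hxKc
          _ = 0 := hdxx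
      · apply le_of_forall_pos_le_add
        intro ε hε
        obtain ⟨a, b, ha, hb, hab⟩ :=
          exists_close_pair H heq1 hxH.2 hvs1 hxK2 (habs1 vs hvs1) hε
        have h1 : fstar ≤ hDist a b :=
          hSetDist_le_hDist (mem_carrier.mpr ha) (mem_carrier.mpr hb)
        linarith
    refine ⟨Kneg, hKnegUltra, hKnegSupp, fun K' h1 h2 => ?_⟩
    calc hSetDist H.carrier K'.carrier ≤ M := hMem K' h1 h2
      _ ≤ fstar := hMle
      _ ≤ 0 := hfstar0
      _ ≤ hSetDist H.carrier Kneg.carrier := hSetDist_nonneg H Kneg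


end Hyp
end
end

section
/- If C ⊂ H^d is a complete body of diameter δ, then for every boundary point p of C there exists a point p' in C with hyperbolic distance d(p, p') = δ. -/
/- We formalize hyperbolic space `H^d` via the Beltrami–Klein model: the open
unit ball of `ℝ^d`, where hyperbolic geodesic segments are exactly Euclidean
segments (so hyperbolic convexity = Euclidean convexity), hyperplanes are
chords of affine hyperplanes, and the hyperbolic distance is given by the
Cayley–Klein formula `cosh d(x,y) = (1 - ⟪x,y⟫)/√((1-‖x‖²)(1-‖y‖²))`. -/

noncomputable section
open Metric Set RealInnerProductSpace

namespace Hyp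

lemma hDist_comm {d : ℕ} (x y : E d) : hDist x y = hDist y x := by
  unfold hDist
  rw [real_inner_comm, mul_comm]

lemma hDist_self {d : ℕ} {x : E d} (hx : ‖x‖ < 1) : hDist x x = 0 := by
  have h1 : (0:ℝ) < 1 - ‖x‖ ^ 2 := by nlinarith [norm_nonneg x]
  have h2 : Real.sqrt (1 - ‖x‖ ^ 2) * Real.sqrt (1 - ‖x‖ ^ 2) = 1 - ‖x‖ ^ 2 :=
    Real.mul_self_sqrt h1.le
  unfold hDist
  rw [real_inner_self_eq_norm_sq, h2, div_self h1.ne']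
  unfold acosh
  norm_num

lemma continuousAt_hDist_s8 {d : ℕ} {x y : E d} (hx : ‖x‖ < 1) (hy : ‖y‖ < 1) :
    ContinuousAt (fun q : E d × E d => hDist q.1 q.2) (x, y) := by
  have hdx : (0:ℝ) < Real.sqrt (1 - ‖x‖ ^ 2) :=
    Real.sqrt_pos.2 (by nlinarith [norm_nonneg x])
  have hdy : (0:ℝ) < Real.sqrt (1 - ‖y‖ ^ 2) :=
    Real.sqrt_pos.2 (by nlinarith [norm_nonneg y])
  have hden : Real.sqrt (1 - ‖x‖ ^ 2) * Real.sqrt (1 - ‖y‖ ^ 2) ≠ 0 :=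
    (mul_pos hdx hdy).ne'
  have hnum : (0:ℝ) < 1 - (inner ℝ x y : ℝ) := by
    have h1 := real_inner_le_norm x y
    have h2 : ‖x‖ * ‖y‖ < 1 := by nlinarith [norm_nonneg x, norm_nonneg y]
    linarith
  have c1 : Continuous fun q : E d × E d => (1 - (inner ℝ q.1 q.2 : ℝ)) :=
    continuous_const.sub continuous_inner
  have c2 : Continuous fun q : E d × E d =>
      Real.sqrt (1 - ‖q.1‖ ^ 2) * Real.sqrt (1 - ‖q.2‖ ^ 2) :=
    (Real.continuous_sqrt.comp (continuous_const.sub (continuous_fst.norm.pow 2))).mul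
      (Real.continuous_sqrt.comp (continuous_const.sub (continuous_snd.norm.pow 2)))
  have hg : ContinuousAt (fun q : E d × E d =>
      (1 - (inner ℝ q.1 q.2 : ℝ)) /
        (Real.sqrt (1 - ‖q.1‖ ^ 2) * Real.sqrt (1 - ‖q.2‖ ^ 2))) (x, y) :=
    c1.continuousAt.div c2.continuousAt hden
  set z : ℝ := (1 - (inner ℝ x y : ℝ)) /
      (Real.sqrt (1 - ‖x‖ ^ 2) * Real.sqrt (1 - ‖y‖ ^ 2)) with hzdef
  have hz : 0 < z := div_pos hnum (mul_pos hdx hdy)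
  have hac : ContinuousAt acosh z := by
    have h1 : Continuous fun w : ℝ => w + Real.sqrt (w ^ 2 - 1) :=
      continuous_id.add (Real.continuous_sqrt.comp ((continuous_pow 2).sub continuous_const))
    have h2 : z + Real.sqrt (z ^ 2 - 1) ≠ 0 :=
      (add_pos_of_pos_of_nonneg hz (Real.sqrt_nonneg _)).ne'
    have h1' : ContinuousAt (fun w : ℝ => w + Real.sqrt (w ^ 2 - 1)) z :=
      h1.continuousAt
    have h3 := ContinuousAt.comp (g := Real.log)
      (f := fun w : ℝ => w + Real.sqrt (w ^ 2 - 1)) (x := z)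
      (Real.continuousAt_log h2) h1'
    exact h3
  unfold hDist
  exact ContinuousAt.comp (g := acosh)
    (f := fun q : E d × E d => (1 - (inner ℝ q.1 q.2 : ℝ)) /
      (Real.sqrt (1 - ‖q.1‖ ^ 2) * Real.sqrt (1 - ‖q.2‖ ^ 2))) (x := (x, y)) hac hg

set_option maxHeartbeats 1000000 in
/-- For every boundary point `p` of a complete body of diameter `δ` there is
`p' ∈ C` with `d(p,p') = δ`. -/
theorem exists_diametral_point {d : ℕ} (C : Set (E d)) (hC : IsBody C)
    (δ : ℝ) (hcomp : IsComplete C δ) (p : E d) (hp : p ∈ frontier C) :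
    ∃ p' ∈ C, hDist p p' = δ := by
  obtain ⟨hcpt, hconv, hint, hsub⟩ := hC
  have hclosed : IsClosed C := hcpt.isClosed
  have hpC : p ∈ C := by
    have := hp.1
    rwa [hclosed.closure_eq] at this
  have hnormlt : ∀ x ∈ C, ‖x‖ < 1 := fun x hx =>
    mem_ball_zero_iff.1 (hsub hx)
  have hpball : p ∈ ball01 d := hsub hpC
  -- nonemptiness and a base point
  obtain ⟨c, hcC⟩ : C.Nonempty := hint.mono interior_subset
  -- boundedness of the distance set over C
  have hcontOn : ContinuousOn (fun q : E d × E d => hDist q.1 q.2) (C ×ˢ C) :=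
    fun q hq => (continuousAt_hDist_s8 (hnormlt _ hq.1) (hnormlt _ hq.2)).continuousWithinAt
  have himg : {r | ∃ a ∈ C, ∃ b ∈ C, hDist a b = r} =
      (fun q : E d × E d => hDist q.1 q.2) '' (C ×ˢ C) := by
    ext r
    constructor
    · rintro ⟨a, ha, b, hb, rfl⟩; exact ⟨(a, b), ⟨ha, hb⟩, rfl⟩
    · rintro ⟨⟨a, b⟩, ⟨ha, hb⟩, rfl⟩; exact ⟨a, ha, b, hb, rfl⟩
  have hbdd : BddAbove {r | ∃ a ∈ C, ∃ b ∈ C, hDist a b = r} := by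
    rw [himg]
    exact ((hcpt.prod hcpt).image_of_continuousOn hcontOn).bddAbove
  have hle : ∀ a ∈ C, ∀ b ∈ C, hDist a b ≤ δ := by
    intro a ha b hb
    have := le_csSup hbdd ⟨a, ha, b, hb, rfl⟩
    rwa [← hDiam, hcomp.1] at this
  have hδ0 : 0 ≤ δ := by
    have := hle c hcC c hcC
    rwa [hDist_self (hnormlt c hcC)] at this
  -- a sequence outside C converging to p
  have hpcl : p ∈ closure Cᶜ := by
    rw [closure_compl]
    exact hp.2
  obtain ⟨x, hxmem, hxt⟩ := mem_closure_iff_seq_limit.1 hpcl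
  -- eventually in the open unit ball
  have hball_open : IsOpen (ball01 d) := isOpen_ball
  have hev : ∀ᶠ n in Filter.atTop, x n ∈ ball01 d :=
    hxt.eventually (hball_open.mem_nhds hpball)
  obtain ⟨N, hN⟩ := Filter.eventually_atTop.1 hev
  set y : ℕ → E d := fun n => x (n + N) with hydef
  have hyball : ∀ n, y n ∈ ball01 d := fun n => hN _ (Nat.le_add_left N n)
  have hynot : ∀ n, y n ∉ C := fun n => hxmem _
  have hyt : Filter.Tendsto y Filter.atTop (nhds p) :=
    hxt.comp (Filter.tendsto_atTop_mono (fun n => Nat.le_add_right n N) Filter.tendsto_id)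
  -- for each n, a point of C at distance > δ from y n
  have key : ∀ n, ∃ b ∈ C, δ < hDist (y n) b := by
    intro n
    have hgt : δ < hDiam (insert (y n) C) := hcomp.2 (y n) (hyball n) (hynot n)
    have hpair : ∃ a ∈ insert (y n) C, ∃ b ∈ insert (y n) C, δ < hDist a b := by
      by_contra hcon
      push_neg at hcon
      have hub : hDiam (insert (y n) C) ≤ δ := by
        apply csSup_le
        · exact ⟨0, c, Set.mem_insert_of_mem _ hcC, c, Set.mem_insert_of_mem _ hcC,
            hDist_self (hnormlt c hcC)⟩
        · rintro r ⟨a, ha, b, hb, rfl⟩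
          exact hcon a ha b hb
      linarith
    obtain ⟨a, ha, b, hb, hab⟩ := hpair
    rcases ha with rfl | ha
    · rcases hb with rfl | hb
      · exfalso
        rw [hDist_self (mem_ball_zero_iff.1 (hyball n))] at hab
        linarith
      · exact ⟨b, hb, hab⟩
    · rcases hb with rfl | hb
      · exact ⟨a, ha, by rwa [hDist_comm]⟩
      · exact absurd hab (not_lt.2 (hle a ha b hb))
  choose a haC hagt using key
  -- compactness: a subsequence of a converges in C
  obtain ⟨p', hp'C, φ, hφ, haφ⟩ := hcpt.tendsto_subseq haC
  refine ⟨p', hp'C, le_antisymm (hle p hpC p' hp'C) ?_⟩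
  have hyφ : Filter.Tendsto (fun k => y (φ k)) Filter.atTop (nhds p) :=
    hyt.comp hφ.tendsto_atTop
  have hpair : Filter.Tendsto (fun k => ((y (φ k)), a (φ k))) Filter.atTop
      (nhds (p, p')) := hyφ.prodMk_nhds haφ
  have hct : ContinuousAt (fun q : E d × E d => hDist q.1 q.2) (p, p') :=
    continuousAt_hDist_s8 (mem_ball_zero_iff.1 hpball) (hnormlt p' hp'C)
  have hdt : Filter.Tendsto (fun k => hDist (y (φ k)) (a (φ k))) Filter.atTop
      (nhds (hDist p p')) :=
    Filter.Tendsto.comp (g := fun q : E d × E d => hDist q.1 q.2)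
      (f := fun k => (y (φ k), a (φ k))) hct.tendsto hpair
  exact ge_of_tendsto hdt (Filter.Eventually.of_forall fun k => (hagt (φ k)).le)

end Hyp
end
end

section
/- Let B be a closed ball of radius δ in H^d, let a, b ∈ B, and let c ∈ H^d satisfy d(a,c) = d(b,c) = δ. Then the circular arc P_c(a,b) is contained in B, where P_c(a,b) is the set of points g with d(c,g) = δ such that the geodesic segment cg meets the segment ab. -/
/- We formalize hyperbolic space `H^d` via the Beltrami–Klein model: the open
unit ball of `ℝ^d`, where hyperbolic geodesic segments are exactly Euclidean
segments (so hyperbolic convexity = Euclidean convexity), hyperplanes are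
chords of affine hyperplanes, and the hyperbolic distance is given by the
Cayley–Klein formula `cosh d(x,y) = (1 - ⟪x,y⟫)/√((1-‖x‖²)(1-‖y‖²))`. -/

noncomputable section
open Metric Set RealInnerProductSpace

namespace Hyp

lemma norm_lt_one {d : ℕ} {x : E d} (hx : x ∈ ball01 d) : ‖x‖ < 1 := by
  simpa [ball01, dist_zero_right] using hx

lemma sqrt_pos' {d : ℕ} {x : E d} (hx : x ∈ ball01 d) :
    0 < Real.sqrt (1 - ‖x‖ ^ 2) := by
  have h := norm_lt_one hx
  have h0 := norm_nonneg x
  exact Real.sqrt_pos.2 (by nlinarith)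

lemma key_ineq {d : ℕ} {x y : E d} (hx : x ∈ ball01 d) (hy : y ∈ ball01 d) :
    Real.sqrt (1 - ‖x‖ ^ 2) * Real.sqrt (1 - ‖y‖ ^ 2) ≤ 1 - (inner ℝ x y : ℝ) := by
  have hx1 := norm_lt_one hx
  have hy1 := norm_lt_one hy
  have hx0 := norm_nonneg x
  have hy0 := norm_nonneg y
  have hcs : (inner ℝ x y : ℝ) ≤ ‖x‖ * ‖y‖ := real_inner_le_norm x y
  have h1 : Real.sqrt (1 - ‖x‖ ^ 2) * Real.sqrt (1 - ‖y‖ ^ 2)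
      = Real.sqrt ((1 - ‖x‖ ^ 2) * (1 - ‖y‖ ^ 2)) := by
    rw [Real.sqrt_mul (by nlinarith)]
  have h2 : (1 - ‖x‖ ^ 2) * (1 - ‖y‖ ^ 2) ≤ (1 - ‖x‖ * ‖y‖) ^ 2 := by nlinarith [sq_nonneg (‖x‖ - ‖y‖)]
  have h3 : Real.sqrt ((1 - ‖x‖ ^ 2) * (1 - ‖y‖ ^ 2)) ≤ 1 - ‖x‖ * ‖y‖ := by
    calc Real.sqrt ((1 - ‖x‖ ^ 2) * (1 - ‖y‖ ^ 2)) ≤ Real.sqrt ((1 - ‖x‖ * ‖y‖) ^ 2) :=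
          Real.sqrt_le_sqrt h2
      _ = |1 - ‖x‖ * ‖y‖| := Real.sqrt_sq_eq_abs _
      _ = 1 - ‖x‖ * ‖y‖ := abs_of_nonneg (by nlinarith)
  linarith [h1 ▸ h3]

lemma acosh_le_acosh {z w : ℝ} (hz : 1 ≤ z) (hzw : z ≤ w) : acosh z ≤ acosh w := by
  unfold acosh
  have h1 : Real.sqrt (z ^ 2 - 1) ≤ Real.sqrt (w ^ 2 - 1) :=
    Real.sqrt_le_sqrt (by nlinarith)
  have h2 : (0:ℝ) < z + Real.sqrt (z ^ 2 - 1) := by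
    have := Real.sqrt_nonneg (z ^ 2 - 1); linarith
  exact Real.log_le_log h2 (by linarith)

lemma le_of_acosh_le {z w : ℝ} (hz : 1 ≤ z) (hw : 1 ≤ w) (h : acosh z ≤ acosh w) :
    z ≤ w := by
  by_contra hlt
  push_neg at hlt
  have h1 : Real.sqrt (w ^ 2 - 1) ≤ Real.sqrt (z ^ 2 - 1) :=
    Real.sqrt_le_sqrt (by nlinarith)
  have h2 : (0:ℝ) < w + Real.sqrt (w ^ 2 - 1) := by
    have := Real.sqrt_nonneg (w ^ 2 - 1); linarith
  have : acosh w < acosh z := Real.log_lt_log h2 (by linarith)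
  linarith

set_option maxHeartbeats 1000000 in
/-- If `a, b` lie in a closed ball `B` of radius `δ` and `c` is at distance
`δ` from both, then the arc `P_c(a,b)` is contained in `B`. -/
theorem arcP_subset_ball {d : ℕ} (q c a b : E d) (δ : ℝ)
    (hq : q ∈ ball01 d) (hc : c ∈ ball01 d)
    (ha : a ∈ hBall q δ) (hb : b ∈ hBall q δ)
    (hac : hDist a c = δ) (hbc : hDist b c = δ) :
    arcP c a b δ ⊆ hBall q δ := by
  rintro g ⟨hg1, hgd, p, hpcg, hpab⟩
  obtain ⟨ha1, had⟩ := ha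
  obtain ⟨hb1, hbd⟩ := hb
  obtain ⟨t1, t2, ht1, ht2, ht12, e1⟩ := hpcg
  obtain ⟨s1, s2, hs1, hs2, hs12, e2⟩ := hpab
  set α := Real.sqrt (1 - ‖q‖ ^ 2) with hα
  set β := Real.sqrt (1 - ‖c‖ ^ 2) with hβ
  set γa := Real.sqrt (1 - ‖a‖ ^ 2) with hγa
  set γb := Real.sqrt (1 - ‖b‖ ^ 2) with hγb
  set γg := Real.sqrt (1 - ‖g‖ ^ 2) with hγg
  have hαp : 0 < α := sqrt_pos' hq
  have hβp : 0 < β := sqrt_pos' hc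
  have hγap : 0 < γa := sqrt_pos' ha1
  have hγbp : 0 < γb := sqrt_pos' hb1
  have hγgp : 0 < γg := sqrt_pos' hg1
  -- key inequalities F ≥ 1
  have kqa := key_ineq hq ha1
  have kqb := key_ineq hq hb1
  have kqc := key_ineq hq hc
  have kac := key_ineq ha1 hc
  have kbc := key_ineq hb1 hc
  have kcg := key_ineq hc hg1
  have kqg := key_ineq hq hg1
  -- L(a) ≤ 0
  have hLa : β * (1 - (inner ℝ q a : ℝ)) ≤ α * (1 - (inner ℝ c a : ℝ)) := by
    have h1 : (1 - (inner ℝ q a : ℝ)) / (α * γa) ≤ (1 - (inner ℝ a c : ℝ)) / (γa * β) := by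
      apply le_of_acosh_le
      · rw [one_le_div (by positivity)]; exact kqa
      · rw [one_le_div (by positivity)]; exact kac
      · exact had.trans hac.symm.le
    rw [div_le_div_iff₀ (by positivity) (by positivity)] at h1
    have hcomm : (inner ℝ c a : ℝ) = (inner ℝ a c : ℝ) := real_inner_comm a c
    rw [← hcomm] at h1
    nlinarith [hγap, h1]
  -- L(b) ≤ 0
  have hLb : β * (1 - (inner ℝ q b : ℝ)) ≤ α * (1 - (inner ℝ c b : ℝ)) := by
    have h1 : (1 - (inner ℝ q b : ℝ)) / (α * γb) ≤ (1 - (inner ℝ b c : ℝ)) / (γb * β) := by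
      apply le_of_acosh_le
      · rw [one_le_div (by positivity)]; exact kqb
      · rw [one_le_div (by positivity)]; exact kbc
      · exact hbd.trans hbc.symm.le
    rw [div_le_div_iff₀ (by positivity) (by positivity)] at h1
    have hcomm : (inner ℝ c b : ℝ) = (inner ℝ b c : ℝ) := real_inner_comm b c
    rw [← hcomm] at h1
    nlinarith [hγbp, h1]
  -- L(c) ≥ 0
  have hcc : (inner ℝ c c : ℝ) = ‖c‖ ^ 2 := real_inner_self_eq_norm_sq c
  have hβsq : β ^ 2 = 1 - ‖c‖ ^ 2 := Real.sq_sqrt (by nlinarith [norm_lt_one hc, norm_nonneg c])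
  have hLc : α * (1 - (inner ℝ c c : ℝ)) ≤ β * (1 - (inner ℝ q c : ℝ)) := by
    rw [hcc, ← hβsq]
    nlinarith [kqc, hβp]
  -- linearity: inner with p
  have hqp : (inner ℝ q p : ℝ) = s1 * (inner ℝ q a : ℝ) + s2 * (inner ℝ q b : ℝ) := by
    rw [← e2, inner_add_right, real_inner_smul_right, real_inner_smul_right]
  have hcp : (inner ℝ c p : ℝ) = s1 * (inner ℝ c a : ℝ) + s2 * (inner ℝ c b : ℝ) := by
    rw [← e2, inner_add_right, real_inner_smul_right, real_inner_smul_right]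
  have hqp' : (inner ℝ q p : ℝ) = t1 * (inner ℝ q c : ℝ) + t2 * (inner ℝ q g : ℝ) := by
    rw [← e1, inner_add_right, real_inner_smul_right, real_inner_smul_right]
  have hcp' : (inner ℝ c p : ℝ) = t1 * (inner ℝ c c : ℝ) + t2 * (inner ℝ c g : ℝ) := by
    rw [← e1, inner_add_right, real_inner_smul_right, real_inner_smul_right]
  -- L(p) ≤ 0
  have hLp : β * (1 - (inner ℝ q p : ℝ)) ≤ α * (1 - (inner ℝ c p : ℝ)) := by
    have A := mul_le_mul_of_nonneg_left hLa hs1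
    have B := mul_le_mul_of_nonneg_left hLb hs2
    have C : β * (1 - (inner ℝ q p : ℝ)) =
        s1 * (β * (1 - (inner ℝ q a : ℝ))) + s2 * (β * (1 - (inner ℝ q b : ℝ))) := by
      rw [hqp]; linear_combination (-β) * hs12
    have D : α * (1 - (inner ℝ c p : ℝ)) =
        s1 * (α * (1 - (inner ℝ c a : ℝ))) + s2 * (α * (1 - (inner ℝ c b : ℝ))) := by
      rw [hcp]; linear_combination (-α) * hs12
    linarith
  -- t2 * L(g) ≤ 0
  have hkey : t2 * (β * (1 - (inner ℝ q g : ℝ)) - α * (1 - (inner ℝ c g : ℝ))) ≤ 0 := by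
    have T := mul_le_mul_of_nonneg_left hLc ht1
    have Eq : β * (1 - (inner ℝ q p : ℝ)) - α * (1 - (inner ℝ c p : ℝ)) =
        t1 * (β * (1 - (inner ℝ q c : ℝ)) - α * (1 - (inner ℝ c c : ℝ)))
        + t2 * (β * (1 - (inner ℝ q g : ℝ)) - α * (1 - (inner ℝ c g : ℝ))) := by
      rw [hqp', hcp']; linear_combination (α - β) * ht12
    nlinarith [hLp, Eq, T]
  rcases eq_or_lt_of_le ht2 with ht2e | ht2p
  · -- t2 = 0 : p = c, forces q = c
    have hpc : p = c := by
      have ht1e : t1 = 1 := by linarith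
      rw [← e1, ht1e, ← ht2e]
      simp
    have hLc2 : β * (1 - (inner ℝ q c : ℝ)) ≤ α * (1 - (inner ℝ c c : ℝ)) := by
      rw [hpc] at hLp; exact hLp
    have hLceq : β * (1 - (inner ℝ q c : ℝ)) = α * (1 - (inner ℝ c c : ℝ)) := le_antisymm hLc2 hLc
    -- derive q = c
    have hqc1 : 1 - (inner ℝ q c : ℝ) = α * β := by
      rw [hcc, ← hβsq] at hLceq
      have : β * (1 - (inner ℝ q c : ℝ)) = β * (α * β) := by rw [hLceq]; ring
      exact mul_left_cancel₀ (ne_of_gt hβp) this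
    have hcs : (inner ℝ q c : ℝ) ≤ ‖q‖ * ‖c‖ := real_inner_le_norm q c
    have hq1 := norm_lt_one hq
    have hc1 := norm_lt_one hc
    have hq0 := norm_nonneg q
    have hc0 := norm_nonneg c
    have hαsq : α ^ 2 = 1 - ‖q‖ ^ 2 := Real.sq_sqrt (by nlinarith only [hq1, hq0])
    have h2 : (1 - ‖q‖ ^ 2) * (1 - ‖c‖ ^ 2) ≤ (1 - ‖q‖ * ‖c‖) ^ 2 := by
      nlinarith only [sq_nonneg (‖q‖ - ‖c‖)]
    have hab1 : α * β ≤ 1 - ‖q‖ * ‖c‖ := by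
      have : α * β = Real.sqrt ((1 - ‖q‖ ^ 2) * (1 - ‖c‖ ^ 2)) := by
        rw [hα, hβ, ← Real.sqrt_mul (by nlinarith only [hq1, hq0])]
      rw [this]
      calc Real.sqrt ((1 - ‖q‖ ^ 2) * (1 - ‖c‖ ^ 2)) ≤ Real.sqrt ((1 - ‖q‖ * ‖c‖) ^ 2) :=
            Real.sqrt_le_sqrt h2
        _ = |1 - ‖q‖ * ‖c‖| := Real.sqrt_sq_eq_abs _
        _ = 1 - ‖q‖ * ‖c‖ := abs_of_nonneg (by nlinarith only [hq0, hc0, hq1, hc1])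
    -- equality everywhere
    have hinner : (inner ℝ q c : ℝ) = ‖q‖ * ‖c‖ := by linarith only [hqc1, hab1, hcs]
    have habeq : α * β = 1 - ‖q‖ * ‖c‖ := by linarith only [hqc1, hinner]
    have hnormeq : ‖q‖ = ‖c‖ := by
      have h3 : (α * β) ^ 2 = (1 - ‖q‖ ^ 2) * (1 - ‖c‖ ^ 2) := by
        rw [mul_pow, hαsq, hβsq]
      have h7 : (1 - ‖q‖ * ‖c‖) ^ 2 = (1 - ‖q‖ ^ 2) * (1 - ‖c‖ ^ 2) := by
        rw [← habeq, h3]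
      have h6 : (‖q‖ - ‖c‖) ^ 2 = 0 := by linear_combination h7
      have h8 : ‖q‖ - ‖c‖ = 0 := by
        exact pow_eq_zero_iff two_ne_zero |>.mp h6
      linarith only [h8]
    have hqceq : q = c := by
      have h4 : ‖q - c‖ ^ 2 = ‖q‖ ^ 2 - 2 * (inner ℝ q c : ℝ) + ‖c‖ ^ 2 := norm_sub_sq_real q c
      have h5 : ‖q - c‖ ^ 2 = 0 := by rw [h4, hinner, hnormeq]; ring
      have h9 : ‖q - c‖ = 0 := pow_eq_zero_iff two_ne_zero |>.mp h5
      have h10 : q - c = 0 := norm_eq_zero.mp h9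
      exact sub_eq_zero.mp h10
    refine ⟨hg1, ?_⟩
    rw [hqceq]
    exact le_of_eq hgd
  · -- t2 > 0 : L(g) ≤ 0 and conclude
    have hLg : β * (1 - (inner ℝ q g : ℝ)) ≤ α * (1 - (inner ℝ c g : ℝ)) := by
      nlinarith only [hkey, ht2p]
    refine ⟨hg1, ?_⟩
    rw [← hgd]
    apply acosh_le_acosh
    · rw [one_le_div (by positivity)]; exact kqg
    · rw [div_le_div_iff₀ (by positivity) (by positivity)]
      nlinarith only [hγgp, hLg]

end Hyp
end
end
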